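/- For every c ∈ ℝ, the sphere S in ℝ³ with center (0,0,c) and radius √(1+c²) is a sphere of symmetry for π(𝒞): the inversion ψ_S(p) = (1+c²)(p−(0,0,c))/|p−(0,0,c)|² + (0,0,c) maps π(𝒞) onto itself. -/

import Mathlib

/-- The Clifford torus in S³ ⊂ ℝ⁴. -/
noncomputable def cliffordTorus : Set (ℝ × ℝ × ℝ × ℝ) :=
  {x | x.1 ^ 2 + x.2.1 ^ 2 = 1 / 2 ∧ x.2.2.1 ^ 2 + x.2.2.2 ^ 2 = 1 / 2}

/-- Stereographic projection S³ ∖ {(0,0,0,1)} → ℝ³. -/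
noncomputable def stereo4 (x : ℝ × ℝ × ℝ × ℝ) : ℝ × ℝ × ℝ :=
  (x.1 / (1 - x.2.2.2), x.2.1 / (1 - x.2.2.2), x.2.2.1 / (1 - x.2.2.2))

/-- Inversion in the sphere of center (0,0,c) and radius √(1+c²). -/
noncomputable def sphereInv (c : ℝ) (p : ℝ × ℝ × ℝ) : ℝ × ℝ × ℝ :=
  ((1 + c ^ 2) * p.1 / (p.1 ^ 2 + p.2.1 ^ 2 + (p.2.2 - c) ^ 2),
   (1 + c ^ 2) * p.2.1 / (p.1 ^ 2 + p.2.1 ^ 2 + (p.2.2 - c) ^ 2),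
   (1 + c ^ 2) * (p.2.2 - c) / (p.1 ^ 2 + p.2.1 ^ 2 + (p.2.2 - c) ^ 2) + c)

noncomputable def cliffRefl (c : ℝ) (x : ℝ × ℝ × ℝ × ℝ) : ℝ × ℝ × ℝ × ℝ :=
  (x.1, x.2.1, ((1 - c ^ 2) * x.2.2.1 + 2 * c * x.2.2.2) / (1 + c ^ 2),
   (2 * c * x.2.2.1 - (1 - c ^ 2) * x.2.2.2) / (1 + c ^ 2))

lemma one_add_sq_ne (c : ℝ) : (1 : ℝ) + c ^ 2 ≠ 0 := by positivity

lemma cliffRefl_mem (c : ℝ) {x : ℝ × ℝ × ℝ × ℝ} (hx : x ∈ cliffordTorus) :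
    cliffRefl c x ∈ cliffordTorus := by
  obtain ⟨h1, h2⟩ := hx
  refine ⟨h1, ?_⟩
  have hc := one_add_sq_ne c
  simp only [cliffRefl]
  field_simp
  nlinarith [h2, sq_nonneg c]

lemma cliffRefl_invol (c : ℝ) (x : ℝ × ℝ × ℝ × ℝ) : cliffRefl c (cliffRefl c x) = x := by
  have hc := one_add_sq_ne c
  obtain ⟨a, b, z, w⟩ := x
  simp only [cliffRefl, Prod.mk.injEq, true_and]
  constructor <;> field_simp <;> ring

lemma key (c : ℝ) {x : ℝ × ℝ × ℝ × ℝ} (hx : x ∈ cliffordTorus) :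
    sphereInv c (stereo4 x) = stereo4 (cliffRefl c x) := by
  obtain ⟨h1, h2⟩ := hx
  obtain ⟨a, b, z, w⟩ := x
  simp only [cliffordTorus, Set.mem_setOf_eq] at h1 h2
  have hc := one_add_sq_ne c
  have hw : (0 : ℝ) < 1 - w := by nlinarith [sq_nonneg z, sq_nonneg (w - 1)]
  have hK : (0 : ℝ) < (1 + c ^ 2) + (1 - c ^ 2) * w - 2 * c * z := by
    nlinarith [sq_nonneg ((1 - c ^ 2) * z + 2 * c * w), sq_nonneg (1 + c ^ 2), h2,
      sq_nonneg ((1 - c ^ 2) * w - 2 * c * z - (1 + c ^ 2)), sq_nonneg c]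
  have hDK : (a / (1 - w)) ^ 2 + (b / (1 - w)) ^ 2 + (z / (1 - w) - c) ^ 2
      = ((1 + c ^ 2) + (1 - c ^ 2) * w - 2 * c * z) / (1 - w) := by
    field_simp
    linear_combination h1 + h2
  have hw2 : (1 : ℝ) - (2 * c * z - (1 - c ^ 2) * w) / (1 + c ^ 2)
      = ((1 + c ^ 2) + (1 - c ^ 2) * w - 2 * c * z) / (1 + c ^ 2) := by
    field_simp; ring
  simp only [sphereInv, stereo4, cliffRefl, Prod.mk.injEq, hDK, hw2]
  have hK' : 1 + c ^ 2 + w * (1 - c ^ 2) - c * z * 2 ≠ 0 := by nlinarith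
  refine ⟨?_, ?_, ?_⟩
  · field_simp
  · field_simp
  · field_simp; ring

/-- For every c ∈ ℝ, the sphere of center (0,0,c) and radius √(1+c²) is a sphere
    of symmetry for the stereographic projection of the Clifford torus. -/
theorem sphereInv_preserves_stereo_clifford (c : ℝ) :
    sphereInv c '' (stereo4 '' cliffordTorus) = stereo4 '' cliffordTorus := by
  apply Set.Subset.antisymm
  · rintro p ⟨q, ⟨x, hx, rfl⟩, rfl⟩
    exact ⟨cliffRefl c x, cliffRefl_mem c hx, (key c hx).symm⟩
  · rintro p ⟨x, hx, rfl⟩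
    exact ⟨stereo4 (cliffRefl c x), ⟨cliffRefl c x, cliffRefl_mem c hx, rfl⟩,
      by rw [key c (cliffRefl_mem c hx), cliffRefl_invol]⟩
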